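/- Let α ∈ (0,1), β ∈ ℝ, c_α = (1−α/2)(1−α), and let K(x,y) = c_α·∫₀ˣ∫₀ʸ e^{β(x−u)} e^{β(y−v)} |u−v|^{−α} dv du for x,y ∈ [0,1]. Suppose λ > 0 and φ : [0,1] → ℝ is continuously differentiable with ∫₀¹ K(x,y)φ(y) dy = λ·φ(x) for all x ∈ [0,1]. Define ψ(x) = e^{−βx}·∫ₓ¹ e^{βr} φ(r) dr. Then ψ is twice continuously differentiable on [0,1], ψ'(x) + β·ψ(x) = −φ(x), and ψ solves the generalized spectral problem: ∫₀¹ c_α·|x−y|^{−α}·ψ(y) dy = λ·(β²·ψ(x) − ψ''(x)) for all x ∈ [0,1], with boundary conditions ψ(1) = 0 and ψ'(0) + β·ψ(0) = 0. -/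

import Mathlib

open Real Set intervalIntegral MeasureTheory

/-- The fOU covariance kernel for `H = 1 − α/2 > 1/2`,
`K(x,y) = c_α ∫₀ˣ∫₀ʸ e^{β(x−u)} e^{β(y−v)} |u−v|^{−α} dv du`, `c_α = (1−α/2)(1−α)`. -/
noncomputable def fOUkernelHigh (α β : ℝ) (x y : ℝ) : ℝ :=
  (1 - α / 2) * (1 - α) *
    ∫ u in (0:ℝ)..x, ∫ v in (0:ℝ)..y,
      Real.exp (β * (x - u)) * Real.exp (β * (y - v)) * |u - v| ^ (-α)

variable {α β : ℝ}


lemma absRpowII {r : ℝ} (hr : -1 < r) (a b : ℝ) :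
    IntervalIntegrable (fun w => |w| ^ r) volume a b := by
  have key : ∀ c : ℝ, 0 ≤ c → IntervalIntegrable (fun w => |w| ^ r) volume 0 c := by
    intro c hc
    rw [intervalIntegrable_iff, uIoc_of_le hc]
    have h1 := (intervalIntegrable_rpow' hr (a := 0) (b := c))
    rw [intervalIntegrable_iff, uIoc_of_le hc] at h1
    refine h1.congr_fun (fun x hx => ?_) measurableSet_Ioc
    rw [abs_of_pos hx.1]
  have keyall : ∀ c : ℝ, IntervalIntegrable (fun w => |w| ^ r) volume 0 c := by
    intro c
    rcases le_total 0 c with hc | hc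
    · exact key c hc
    · rw [IntervalIntegrable.iff_comp_neg]
      simpa using key (-c) (by linarith)
  exact (keyall a).symm.trans (keyall b)

lemma qII (hα : α < 1) (a b : ℝ) :
    IntervalIntegrable (fun w => Real.exp (β * w) * |w| ^ (-α)) volume a b :=
  (absRpowII (by linarith) a b).continuousOn_mul (by fun_prop)

/-- primitive of `e^{βw}|w|^{-α}`. -/
noncomputable def Phi (α β t : ℝ) : ℝ := ∫ w in (0:ℝ)..t, Real.exp (β * w) * |w| ^ (-α)

lemma Phi_cont (hα : α < 1) : Continuous (Phi α β) :=
  intervalIntegral.continuous_primitive (fun a b => qII hα a b) 0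

/-- `hh α β y u = ∫₀ʸ e^{β(y−v)}|u−v|^{-α} dv` in closed form. -/
noncomputable def hh (α β y u : ℝ) : ℝ :=
  Real.exp (β * (y - u)) * (Phi α β u - Phi α β (u - y))

lemma hh_cont (hα : α < 1) : Continuous (fun p : ℝ × ℝ => hh α β p.1 p.2) := by
  unfold hh
  have := Phi_cont (β := β) hα
  fun_prop

lemma inner_eq (hα : α < 1) (y u : ℝ) :
    (∫ v in (0:ℝ)..y, Real.exp (β * (y - v)) * |u - v| ^ (-α)) = hh α β y u := by
  have e1 : ∀ v : ℝ, Real.exp (β * (y - v)) * |u - v| ^ (-α)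
      = Real.exp (β * (y - u)) * (Real.exp (β * (u - v)) * |u - v| ^ (-α)) := by
    intro v
    rw [← mul_assoc, ← Real.exp_add]
    ring_nf
  rw [intervalIntegral.integral_congr (g := fun v => Real.exp (β * (y - u)) *
      (Real.exp (β * (u - v)) * |u - v| ^ (-α))) (fun v _ => e1 v)]
  rw [intervalIntegral.integral_const_mul]
  have e2 : (∫ v in (0:ℝ)..y, Real.exp (β * (u - v)) * |u - v| ^ (-α))
      = ∫ w in (u - y)..(u - 0), Real.exp (β * w) * |w| ^ (-α) := by
    simpa using intervalIntegral.integral_comp_sub_left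
      (a := 0) (b := y) (fun w => Real.exp (β * w) * |w| ^ (-α)) u
  rw [e2]
  have e3 := intervalIntegral.integral_interval_sub_left (μ := volume)
    (f := fun w => Real.exp (β * w) * |w| ^ (-α)) (a := 0) (b := u) (c := u - y)
    (qII hα 0 u) (qII hα 0 (u - y))
  rw [hh, Phi, Phi, sub_zero, e3]

noncomputable def KK (α β x y : ℝ) : ℝ :=
  (1 - α / 2) * (1 - α) *
    (Real.exp (β * x) * ∫ u in (0:ℝ)..x, Real.exp (-(β * u)) * hh α β y u)

lemma K_eq (hα : α < 1) (x y : ℝ) : fOUkernelHigh α β x y = KK α β x y := by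
  unfold fOUkernelHigh KK
  congr 1
  have e1 : ∀ u : ℝ, (∫ v in (0:ℝ)..y,
      Real.exp (β * (x - u)) * Real.exp (β * (y - v)) * |u - v| ^ (-α))
      = Real.exp (β * x) * (Real.exp (-(β * u)) * hh α β y u) := by
    intro u
    rw [show (fun v => Real.exp (β * (x - u)) * Real.exp (β * (y - v)) * |u - v| ^ (-α))
        = fun v => Real.exp (β * (x - u)) * (Real.exp (β * (y - v)) * |u - v| ^ (-α)) by
      funext v; ring]
    rw [intervalIntegral.integral_const_mul, inner_eq hα y u, ← mul_assoc, ← Real.exp_add]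
    ring_nf
  rw [intervalIntegral.integral_congr (fun u _ => e1 u), intervalIntegral.integral_const_mul]

lemma KK_cont (hα : α < 1) : Continuous (fun p : ℝ × ℝ => KK α β p.1 p.2) := by
  unfold KK
  have h2 : Continuous (fun p : ℝ × ℝ => ∫ u in (0:ℝ)..p.1,
      Real.exp (-(β * u)) * hh α β p.2 u) := by
    apply intervalIntegral.continuous_parametric_intervalIntegral_of_continuous
      (f := fun (p : ℝ × ℝ) (u : ℝ) => Real.exp (-(β * u)) * hh α β p.2 u)
      (s := fun p : ℝ × ℝ => p.1)
    · have := hh_cont (β := β) hα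
      unfold Function.uncurry
      fun_prop
    · fun_prop
  fun_prop

lemma KK_hasDeriv (hα : α < 1) (y x : ℝ) :
    HasDerivAt (fun x => KK α β x y)
      (β * KK α β x y + (1 - α / 2) * (1 - α) * hh α β y x) x := by
  have hcont : Continuous (fun u => Real.exp (-(β * u)) * hh α β y u) := by
    have := hh_cont (β := β) hα
    fun_prop
  have hP : HasDerivAt (fun x => ∫ u in (0:ℝ)..x, Real.exp (-(β * u)) * hh α β y u)
      (Real.exp (-(β * x)) * hh α β y x) x :=
    intervalIntegral.integral_hasDerivAt_right (hcont.intervalIntegrable _ _)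
      (hcont.stronglyMeasurableAtFilter _ _) hcont.continuousAt
  have hE : HasDerivAt (fun x => Real.exp (β * x)) (β * Real.exp (β * x)) x := by
    simpa [mul_comm, Function.comp_def] using (Real.hasDerivAt_exp (β * x)).comp x
      ((hasDerivAt_id x).const_mul β)
  have := (hE.mul hP).const_mul ((1 - α / 2) * (1 - α))
  refine this.congr_deriv ?_
  unfold KK
  have : Real.exp (β * x) * Real.exp (-(β * x)) = 1 := by
    rw [← Real.exp_add]; simp
  linear_combination ((1 - α / 2) * (1 - α) * hh α β y x) * this

set_option maxHeartbeats 1000000 in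
lemma deriv_under (hα : α < 1) (g : ℝ → ℝ) (hg : Continuous g) (x : ℝ) :
    HasDerivAt (fun x => ∫ y in (0:ℝ)..1, KK α β x y * g y)
      (β * (∫ y in (0:ℝ)..1, KK α β x y * g y)
        + (1 - α / 2) * (1 - α) * ∫ y in (0:ℝ)..1, hh α β y x * g y) x := by
  have hDcont : Continuous (fun p : ℝ × ℝ =>
      (β * KK α β p.1 p.2 + (1 - α / 2) * (1 - α) * hh α β p.2 p.1) * g p.2) := by
    have h1 := KK_cont (β := β) hα
    have h2 : Continuous (fun p : ℝ × ℝ => hh α β p.2 p.1) := by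
      have := hh_cont (β := β) hα
      fun_prop
    fun_prop
  obtain ⟨M, hM⟩ : ∃ M, ∀ p ∈ Icc (x - 1) (x + 1) ×ˢ Icc (0:ℝ) 1,
      ‖(β * KK α β p.1 p.2 + (1 - α / 2) * (1 - α) * hh α β p.2 p.1) * g p.2‖ ≤ M :=
    (isCompact_Icc.prod isCompact_Icc).exists_bound_of_continuousOn hDcont.continuousOn
  have key := intervalIntegral.hasDerivAt_integral_of_dominated_loc_of_deriv_le
    (F := fun x y => KK α β x y * g y)
    (F' := fun x y => (β * KK α β x y + (1 - α / 2) * (1 - α) * hh α β y x) * g y)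
    (x₀ := x) (a := 0) (b := 1) (bound := fun _ => M) (μ := volume)
    (Metric.ball_mem_nhds x zero_lt_one)
    (Filter.Eventually.of_forall fun x' => (Continuous.aestronglyMeasurable (by
      have := KK_cont (β := β) hα; fun_prop)))
    (Continuous.intervalIntegrable (by have := KK_cont (β := β) hα; fun_prop) _ _)
    (Continuous.aestronglyMeasurable (by
      have h1 := KK_cont (β := β) hα
      have h2 : Continuous (fun y : ℝ => hh α β y x) := by
        have := hh_cont (β := β) hα
        fun_prop
      fun_prop))
    (Filter.Eventually.of_forall fun t ht x' hx' => by
      refine hM (x', t) ⟨?_, ?_⟩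
      · have := Metric.mem_ball.mp hx'
        rw [Real.dist_eq] at this
        constructor <;> [linarith [abs_lt.mp this]; linarith [(abs_lt.mp this).2]]
        
      · rw [uIoc_of_le (by norm_num : (0:ℝ) ≤ 1)] at ht
        exact ⟨ht.1.le, ht.2⟩)
    (intervalIntegrable_const)
    (Filter.Eventually.of_forall fun t ht x' hx' => (KK_hasDeriv hα t x').mul_const (g t))
  have h2 := key.2
  have heq : (∫ y in (0:ℝ)..1, (β * KK α β x y + (1 - α / 2) * (1 - α) * hh α β y x) * g y)
      = β * (∫ y in (0:ℝ)..1, KK α β x y * g y)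
        + (1 - α / 2) * (1 - α) * ∫ y in (0:ℝ)..1, hh α β y x * g y := by
    rw [show (fun y => (β * KK α β x y + (1 - α / 2) * (1 - α) * hh α β y x) * g y)
        = fun y => β * (KK α β x y * g y)
          + (1 - α / 2) * (1 - α) * (hh α β y x * g y) from funext fun y => by ring]
    rw [intervalIntegral.integral_add, intervalIntegral.integral_const_mul,
      intervalIntegral.integral_const_mul]
    · exact Continuous.intervalIntegrable (by
        have := KK_cont (β := β) hα; fun_prop) _ _
    · exact Continuous.intervalIntegrable (by
        have h2 : Continuous (fun y : ℝ => hh α β y x) := by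
          have := hh_cont (β := β) hα
          fun_prop
        fun_prop) _ _
  rwa [heq] at h2

lemma measurable_absRpow (hα : α ≠ 0) : Measurable (fun w : ℝ => |w| ^ (-α)) := by
  have he : (fun w : ℝ => |w| ^ (-α))
      = fun w => if w = 0 then 0 else Real.exp (Real.log |w| * (-α)) := by
    funext w
    by_cases hw : w = 0
    · simp only [hw, if_pos, abs_zero]
      rw [Real.zero_rpow (neg_ne_zero.mpr hα)]
    · rw [if_neg hw, Real.rpow_def_of_pos (abs_pos.mpr hw)]
  rw [he]
  exact Measurable.ite (by simpa using measurableSet_singleton (0:ℝ)) measurable_const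
    ((Real.measurable_log.comp measurable_abs).mul_const _).exp

lemma fubini_tri (hα : α ∈ Ioo (0:ℝ) 1) (g : ℝ → ℝ) (hg : Continuous g) (x : ℝ) :
    (∫ y in (0:ℝ)..1, hh α β y x * g y)
      = ∫ v in (0:ℝ)..1, |x - v| ^ (-α) *
          (Real.exp (-(β * v)) * ∫ r in v..(1:ℝ), Real.exp (β * r) * g r) := by
  set f : ℝ → ℝ → ℝ := fun v y => |x - v| ^ (-α) * (Real.exp (β * (y - v)) * g y) with hf
  set gI : ℝ × ℝ → ℝ := fun p => if p.1 ≤ p.2 then f p.1 p.2 else 0 with hgI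
  set μ₁ : Measure ℝ := volume.restrict (Ioc (0:ℝ) 1) with hμ₁
  have hfm : Measurable (fun p : ℝ × ℝ => f p.1 p.2) := by
    apply Measurable.mul
    · exact (measurable_absRpow (ne_of_gt hα.1)).comp (measurable_const.sub measurable_fst)
    · exact ((((measurable_snd.sub measurable_fst).const_mul β).exp).mul
        (hg.measurable.comp measurable_snd))
  have hgIm : AEStronglyMeasurable gI (μ₁.prod μ₁) := by
    have : gI = Set.indicator {p : ℝ × ℝ | p.1 ≤ p.2} (fun p => f p.1 p.2) := by
      funext p; simp [hgI, Set.indicator_apply, Set.mem_setOf_eq]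
    rw [this]
    exact (hfm.aestronglyMeasurable).indicator
      ((isClosed_le continuous_fst continuous_snd).measurableSet)
  obtain ⟨Mg, hMg⟩ : ∃ M, ∀ y ∈ Icc (0:ℝ) 1, ‖g y‖ ≤ M :=
    isCompact_Icc.exists_bound_of_continuousOn hg.continuousOn
  set C : ℝ := Real.exp |β| * max Mg 0 with hC
  have hCnn : 0 ≤ C := mul_nonneg (Real.exp_nonneg _) (le_max_right _ _)
  have hbound_int : Integrable (fun p : ℝ × ℝ => (C * |x - p.1| ^ (-α)) * (1:ℝ))
      (μ₁.prod μ₁) := by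
    have h0 : IntervalIntegrable (fun v => |x - v| ^ (-α)) volume (x - x) (x - (x-1)) :=
      (absRpowII (r := -α) (by linarith [hα.2]) x (x-1)).comp_sub_left x
    rw [sub_self, show x - (x-1) = 1 by ring] at h0
    have h1 : IntervalIntegrable (fun v => C * |x - v| ^ (-α)) volume 0 1 := h0.const_mul C
    rw [intervalIntegrable_iff_integrableOn_Ioc_of_le (by norm_num : (0:ℝ) ≤ 1)] at h1
    exact Integrable.mul_prod (f := fun v => C * |x - v| ^ (-α)) (g := fun _ => (1:ℝ))
      h1 (integrable_const 1)
  have hgIint : Integrable gI (μ₁.prod μ₁) := by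
    apply Integrable.mono' hbound_int hgIm
    rw [hμ₁, Measure.prod_restrict]
    filter_upwards [ae_restrict_mem (measurableSet_Ioc.prod measurableSet_Ioc)] with p hp
    obtain ⟨hp1, hp2⟩ := hp
    simp only [mem_Ioc] at hp1 hp2
    rw [mul_one]
    by_cases hle : p.1 ≤ p.2
    · have hgp : gI p = f p.1 p.2 := by simp [hgI, hle]
      rw [hgp, hf]
      have h0 : (0:ℝ) ≤ |x - p.1| ^ (-α) := Real.rpow_nonneg (abs_nonneg _) _
      rw [Real.norm_eq_abs, abs_mul, abs_mul, abs_of_nonneg h0,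
        abs_of_nonneg (Real.exp_nonneg _), mul_comm C]
      gcongr
      calc Real.exp (β * (p.2 - p.1)) * |g p.2|
          ≤ Real.exp |β| * max Mg 0 := by
            apply mul_le_mul
            · apply Real.exp_le_exp.mpr
              have h1 : 0 ≤ p.2 - p.1 := by linarith
              have h2 : p.2 - p.1 ≤ 1 := by linarith [hp1.1, hp2.2]
              calc β * (p.2 - p.1) ≤ |β| * (p.2 - p.1) :=
                    mul_le_mul_of_nonneg_right (le_abs_self β) h1
                _ ≤ |β| * 1 := mul_le_mul_of_nonneg_left h2 (abs_nonneg β)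
                _ = |β| := mul_one _
            · exact le_trans (hMg p.2 ⟨hp2.1.le, hp2.2⟩) (le_max_left _ _)
            · exact abs_nonneg _
            · exact Real.exp_nonneg _
        _ = C := hC.symm
    · have hgp : gI p = 0 := by simp [hgI, hle]
      rw [hgp]
      simp only [norm_zero]
      positivity
  -- step 1: LHS = iterated integral over Ioc × Ioc of gI (y outer, v inner)
  have step1 : (∫ y in (0:ℝ)..1, hh α β y x * g y)
      = ∫ y, (∫ v, gI (v, y) ∂μ₁) ∂μ₁ := by
    rw [intervalIntegral.integral_of_le (by norm_num : (0:ℝ) ≤ 1)]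
    apply setIntegral_congr_fun measurableSet_Ioc
    intro y hy
    dsimp only
    have h1 : hh α β y x * g y = ∫ v in (0:ℝ)..y, f v y := by
      rw [← inner_eq (β := β) hα.2 y x, ← intervalIntegral.integral_mul_const]
      apply intervalIntegral.integral_congr
      intro v _
      simp only [hf]; ring
    rw [h1, intervalIntegral.integral_of_le hy.1.le]
    have h2 : ∀ v : ℝ, gI (v, y) = (Iic y).indicator (fun v => f v y) v := by
      intro v
      simp [hgI, Set.indicator_apply, Set.mem_Iic]
    rw [show (fun v => gI (v, y)) = (Iic y).indicator (fun v => f v y) from funext h2]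
    rw [hμ₁, setIntegral_indicator measurableSet_Iic, Ioc_inter_Iic,
      min_eq_right hy.2]
  -- step 2: swap
  have step2 : (∫ y, (∫ v, gI (v, y) ∂μ₁) ∂μ₁) = ∫ v, (∫ y, gI (v, y) ∂μ₁) ∂μ₁ :=
    (MeasureTheory.integral_integral_swap (f := fun v y => gI (v, y)) hgIint).symm
  -- step 3: inner evaluation
  have step3 : (∫ v, (∫ y, gI (v, y) ∂μ₁) ∂μ₁)
      = ∫ v in (0:ℝ)..1, |x - v| ^ (-α) *
          (Real.exp (-(β * v)) * ∫ r in v..(1:ℝ), Real.exp (β * r) * g r) := by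
    rw [intervalIntegral.integral_of_le (by norm_num : (0:ℝ) ≤ 1), hμ₁]
    apply setIntegral_congr_fun measurableSet_Ioc
    intro v hv
    dsimp only
    have h2 : ∀ y : ℝ, gI (v, y) = (Ici v).indicator (fun y => f v y) y := by
      intro y
      simp [hgI, Set.indicator_apply, Set.mem_Ici]
    rw [show (fun y => gI (v, y)) = (Ici v).indicator (fun y => f v y) from funext h2]
    rw [setIntegral_indicator measurableSet_Ici]
    have hset : Ioc (0:ℝ) 1 ∩ Ici v = Icc v 1 := by
      ext y
      simp only [mem_inter_iff, mem_Ioc, mem_Ici, mem_Icc]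
      constructor
      · rintro ⟨⟨_, h1⟩, h2⟩; exact ⟨h2, h1⟩
      · rintro ⟨h1, h2⟩; exact ⟨⟨lt_of_lt_of_le hv.1 h1, h2⟩, h1⟩
    rw [hset, MeasureTheory.integral_Icc_eq_integral_Ioc,
      ← intervalIntegral.integral_of_le hv.2]
    rw [show (fun y => f v y) = fun y => (|x - v| ^ (-α) * Real.exp (-(β * v)))
        * (Real.exp (β * y) * g y) by
      funext y
      simp only [hf]
      rw [mul_assoc, ← mul_assoc (Real.exp (-(β * v))), ← Real.exp_add]
      ring_nf]
    rw [intervalIntegral.integral_const_mul, mul_assoc]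
  rw [step1, step2, step3]


/-- Reduction of the fOU eigenproblem to the generalized spectral problem for `ψ`. -/

theorem fOU_reduction_to_generalized_spectral_problem
    (α β lam : ℝ) (hα : α ∈ Set.Ioo (0:ℝ) 1) (hlam : 0 < lam)
    (φ : ℝ → ℝ) (hφ : ContDiffOn ℝ 1 φ (Icc 0 1))
    (heig : ∀ x ∈ Icc (0:ℝ) 1,
      (∫ y in (0:ℝ)..1, fOUkernelHigh α β x y * φ y) = lam * φ x)
    (ψ : ℝ → ℝ)
    (hψ : ∀ x : ℝ, ψ x = Real.exp (-(β * x)) * ∫ r in x..(1:ℝ), Real.exp (β * r) * φ r) :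
    ContDiffOn ℝ 2 ψ (Icc 0 1) ∧
    (∀ x ∈ Icc (0:ℝ) 1, derivWithin ψ (Icc 0 1) x + β * ψ x = -φ x) ∧
    (∀ x ∈ Icc (0:ℝ) 1,
      (∫ y in (0:ℝ)..1, (1 - α / 2) * (1 - α) * |x - y| ^ (-α) * ψ y)
        = lam * (β ^ 2 * ψ x - derivWithin (derivWithin ψ (Icc 0 1)) (Icc 0 1) x)) ∧
    ψ 1 = 0 ∧
    derivWithin ψ (Icc 0 1) 0 + β * ψ 0 = 0 := by
  obtain ⟨hα0, hα1⟩ := hα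
  have hs : UniqueDiffOn ℝ (Icc (0:ℝ) 1) := uniqueDiffOn_Icc one_pos
  -- clamp
  set cl : ℝ → ℝ := fun y => max 0 (min 1 y) with hcl
  have hcl_cont : Continuous cl := continuous_const.max (continuous_const.min continuous_id)
  have hcl_mem : ∀ y, cl y ∈ Icc (0:ℝ) 1 := fun y =>
    ⟨le_max_left _ _, max_le (by norm_num) (min_le_left _ _)⟩
  have hcl_eq : ∀ y ∈ Icc (0:ℝ) 1, cl y = y := fun y hy => by
    simp only [hcl]; rw [min_eq_right hy.2, max_eq_right hy.1]
  set φc : ℝ → ℝ := fun y => φ (cl y) with hφcdef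
  have hφc_cont : Continuous φc := hφ.continuousOn.comp_continuous hcl_cont hcl_mem
  have hφc_eq : ∀ y ∈ Icc (0:ℝ) 1, φc y = φ y := fun y hy => by
    simp only [hφcdef]; rw [hcl_eq y hy]
  have hintg : Continuous (fun r => Real.exp (β * r) * φc r) := by fun_prop
  -- primitive
  set P : ℝ → ℝ := fun t => ∫ r in (0:ℝ)..t, Real.exp (β * r) * φc r with hPdef
  set A : ℝ := ∫ r in (0:ℝ)..1, Real.exp (β * r) * φc r with hAdef
  have hPd : ∀ t : ℝ, HasDerivAt P (Real.exp (β * t) * φc t) t := fun t =>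
    intervalIntegral.integral_hasDerivAt_right (hintg.intervalIntegrable _ _)
      (hintg.stronglyMeasurableAtFilter _ _) hintg.continuousAt
  set ψc : ℝ → ℝ := fun t => Real.exp (-(β * t)) * (A - P t) with hψcdef
  have hψeq : ∀ t ∈ Icc (0:ℝ) 1, ψ t = ψc t := by
    intro t ht
    rw [hψ t]
    have h1 : (∫ r in t..(1:ℝ), Real.exp (β * r) * φ r)
        = ∫ r in t..(1:ℝ), Real.exp (β * r) * φc r := by
      apply intervalIntegral.integral_congr
      intro r hr
      rw [uIcc_of_le ht.2] at hr
      dsimp only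
      rw [hφc_eq r ⟨le_trans ht.1 hr.1, hr.2⟩]
    have h2 : (∫ r in t..(1:ℝ), Real.exp (β * r) * φc r) = A - P t := by
      have := intervalIntegral.integral_add_adjacent_intervals (μ := volume) (a := (0:ℝ)) (b := t) (c := 1)
        (hintg.intervalIntegrable _ _) (hintg.intervalIntegrable _ _)
      simp only [hPdef, hAdef]
      linarith [this]
    rw [h1, h2]
  have hψcd : ∀ t : ℝ, HasDerivAt ψc (-β * ψc t - φc t) t := by
    intro t
    have hE : HasDerivAt (fun t => Real.exp (-(β * t))) (-β * Real.exp (-(β * t))) t := by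
      have := (Real.hasDerivAt_exp (-(β * t))).comp t
        (((hasDerivAt_id t).const_mul β).neg)
      simpa [mul_comm, Function.comp_def] using this
    have := hE.mul ((hPd t).const_sub A)
    refine this.congr_deriv ?_
    have h1 : Real.exp (-(β * t)) * Real.exp (β * t) = 1 := by
      rw [← Real.exp_add]; simp
    simp only [hψcdef]
    linear_combination (-(φc t)) * h1
  have hψder : ∀ x ∈ Icc (0:ℝ) 1, HasDerivWithinAt ψ (-β * ψ x - φ x) (Icc 0 1) x := by
    intro x hx
    have h1 := ((hψcd x).hasDerivWithinAt (s := Icc (0:ℝ) 1)).congr hψeq (hψeq x hx)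
    have h2 : -β * ψc x - φc x = -β * ψ x - φ x := by
      rw [hψeq x hx, hφc_eq x hx]
    rwa [h2] at h1
  have hψdw : ∀ x ∈ Icc (0:ℝ) 1, derivWithin ψ (Icc 0 1) x = -β * ψ x - φ x :=
    fun x hx => (hψder x hx).derivWithin (hs x hx)
  have hψdiff : DifferentiableOn ℝ ψ (Icc 0 1) :=
    fun x hx => (hψder x hx).differentiableWithinAt
  -- part 1 : C²
  have hψ1 : ContDiffOn ℝ 1 ψ (Icc 0 1) := by
    rw [show (1 : WithTop ℕ∞) = 0 + 1 by norm_num, contDiffOn_succ_iff_derivWithin hs]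
    refine ⟨hψdiff, by simp, ?_⟩
    rw [contDiffOn_zero]
    apply ContinuousOn.congr (f := fun x => -β * ψ x - φ x)
    · exact ((hψdiff.continuousOn.const_smul (-β)).sub hφ.continuousOn).congr (fun x hx => by
        simp [smul_eq_mul])
    · exact fun x hx => hψdw x hx
  have hψ2 : ContDiffOn ℝ 2 ψ (Icc 0 1) := by
    rw [show (2 : WithTop ℕ∞) = 1 + 1 by norm_num, contDiffOn_succ_iff_derivWithin hs]
    refine ⟨hψdiff, by simp, ?_⟩
    apply ContDiffOn.congr (f := fun x => -β * ψ x - φ x)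
    · exact (ContDiffOn.const_smul (-β) hψ1).sub hφ |>.congr (fun x hx => by simp [smul_eq_mul])
    · exact fun x hx => hψdw x hx
  -- ψ 1 = 0
  have hψ1eq : ψ 1 = 0 := by
    rw [hψ 1, intervalIntegral.integral_same, mul_zero]
  -- φ 0 = 0
  have hφ0 : φ 0 = 0 := by
    have h := heig 0 ⟨le_refl 0, by norm_num⟩
    have h2 : ∀ y : ℝ, fOUkernelHigh α β 0 y = 0 := by
      intro y
      unfold fOUkernelHigh
      rw [intervalIntegral.integral_same, mul_zero]
    rw [show (fun y => fOUkernelHigh α β 0 y * φ y) = fun _ => (0:ℝ) from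
      funext fun y => by rw [h2 y, zero_mul]] at h
    simp only [intervalIntegral.integral_const, smul_zero, sub_zero] at h
    have h3 : lam * φ 0 = 0 := h.symm
    exact (mul_eq_zero.mp h3).resolve_left (ne_of_gt hlam)
  constructor
  · exact hψ2
  constructor
  · intro x hx; rw [hψdw x hx]; ring
  constructor
  · -- main identity
    intro x hx
    set c : ℝ := (1 - α / 2) * (1 - α) with hc
    set Fx : ℝ → ℝ := fun z => ∫ y in (0:ℝ)..1, KK α β z y * φc y with hFxdef
    have hFx : ∀ z ∈ Icc (0:ℝ) 1, Fx z = lam * φ z := by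
      intro z hz
      rw [← heig z hz]
      apply intervalIntegral.integral_congr
      intro y hy
      rw [uIcc_of_le (by norm_num : (0:ℝ) ≤ 1)] at hy
      dsimp only
      rw [K_eq hα1, hφc_eq y hy]
    set J : ℝ := ∫ y in (0:ℝ)..1, hh α β y x * φc y with hJdef
    have hder := deriv_under (β := β) hα1 φc hφc_cont x
    have hlamd : HasDerivWithinAt (fun z => lam * φ z) (β * Fx x + c * J) (Icc 0 1) x :=
      (hder.hasDerivWithinAt).congr (fun z hz => (hFx z hz).symm) (hFx x hx).symm
    have hstar : lam * derivWithin φ (Icc 0 1) x = β * (lam * φ x) + c * J := by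
      have h1 := hlamd.derivWithin (hs x hx)
      rw [derivWithin_const_mul lam
        ((hφ.differentiableOn one_ne_zero) x hx)] at h1
      rw [h1, hFx x hx]
    -- second derivative
    have hdd : derivWithin (derivWithin ψ (Icc 0 1)) (Icc 0 1) x
        = -β * derivWithin ψ (Icc 0 1) x - derivWithin φ (Icc 0 1) x := by
      rw [derivWithin_congr (hψdw) (hψdw x hx)]
      rw [show (fun x => -β * ψ x - φ x) = (fun x => (fun z => -β * ψ z) x - φ x) from rfl]
      rw [derivWithin_fun_sub
        (((hψdiff x hx).const_mul (-β)))
        ((hφ.differentiableOn one_ne_zero) x hx)]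
      rw [derivWithin_const_mul (-β) (hψdiff x hx)]
    -- LHS = c * J
    have hLHS : (∫ y in (0:ℝ)..1, (1 - α / 2) * (1 - α) * |x - y| ^ (-α) * ψ y) = c * J := by
      have h1 : (∫ y in (0:ℝ)..1, (1 - α / 2) * (1 - α) * |x - y| ^ (-α) * ψ y)
          = c * ∫ v in (0:ℝ)..1, |x - v| ^ (-α) *
              (Real.exp (-(β * v)) * ∫ r in v..(1:ℝ), Real.exp (β * r) * φc r) := by
        rw [← intervalIntegral.integral_const_mul]
        apply intervalIntegral.integral_congr
        intro y hy
        rw [uIcc_of_le (by norm_num : (0:ℝ) ≤ 1)] at hy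
        have h2 : ψ y = Real.exp (-(β * y)) * ∫ r in y..(1:ℝ), Real.exp (β * r) * φc r := by
          rw [hψ y]
          congr 1
          apply intervalIntegral.integral_congr
          intro r hr
          rw [uIcc_of_le hy.2] at hr
          dsimp only
          rw [hφc_eq r ⟨le_trans hy.1 hr.1, hr.2⟩]
        dsimp only
        rw [h2, hc]; ring
      rw [h1, hJdef, fubini_tri ⟨hα0, hα1⟩ φc hφc_cont x]
    rw [hLHS]
    -- RHS
    rw [hdd, hψdw x hx]
    have : β ^ 2 * ψ x - (-β * (-β * ψ x - φ x) - derivWithin φ (Icc 0 1) x)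
        = derivWithin φ (Icc 0 1) x - β * φ x := by ring
    rw [this, mul_sub, hstar]
    ring
  constructor
  · exact hψ1eq
  · have h0 : (0:ℝ) ∈ Icc (0:ℝ) 1 := ⟨le_refl 0, by norm_num⟩
    rw [hψdw 0 h0, hφ0]; ring
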